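/- Fix K ≥ 1 and an index k, and assume each distribution has infinite support, i.e. F_i(t) < 1 for all t > 0 and all i, and that ∫₁^∞ log(γ) f_k(γ) dγ < ∞. Let (λ^{(n)})_n be a sequence of vectors in (0,∞)^K with λ_i^{(n)} → ∞ for every i = 1,…,K. Then the ratio [∫_{λ_k^{(n)}}^∞ log(h/λ_k^{(n)}) · ∏_{i≠k} F_i((λ_i^{(n)}/λ_k^{(n)})·h) · f_k(h) dh] / [∫_{λ_k^{(n)}}^∞ log(h/λ_k^{(n)}) f_k(h) dh] tends to 1 as n → ∞. (Asymptotic equivalence (E317): at low power the sum-rate-optimal rate of user k coincides with the single-user water-filling rate; this is the analytic core of Theorem 1, stating that the MAC capacity region is asymptotically the rectangle of single-user capacities.) -/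
import Mathlib


open MeasureTheory Filter Set Topology

/-- The cumulative distribution function `F(t) = ∫₀^t f(γ) dγ`. -/
noncomputable def Fcdf (f : ℝ → ℝ) (t : ℝ) : ℝ := ∫ γ in (0:ℝ)..t, f γ

lemma Fcdf_nonneg {f : ℝ → ℝ} (hnn : ∀ x, 0 ≤ f x) {t : ℝ} (ht : 0 ≤ t) :
    0 ≤ Fcdf f t :=
  intervalIntegral.integral_nonneg ht (fun x _ => hnn x)

lemma Fcdf_eq_setIntegral (f : ℝ → ℝ) {t : ℝ} (ht : 0 ≤ t) :
    Fcdf f t = ∫ x in Ioc 0 t, f x := intervalIntegral.integral_of_le ht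

lemma Fcdf_add_tail {f : ℝ → ℝ} (hint : IntegrableOn f (Ioi 0)) {t : ℝ} (ht : 0 ≤ t) :
    Fcdf f t + ∫ x in Ioi t, f x = ∫ x in Ioi 0, f x := by
  rw [Fcdf_eq_setIntegral f ht,
    ← setIntegral_union (Set.Ioc_disjoint_Ioi le_rfl) measurableSet_Ioi
      (hint.mono_set Ioc_subset_Ioi_self) (hint.mono_set (Ioi_subset_Ioi ht)),
    Set.Ioc_union_Ioi_eq_Ioi ht]

lemma Fcdf_tail_nonneg {f : ℝ → ℝ} (hnn : ∀ x, 0 ≤ f x) (t : ℝ) :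
    0 ≤ ∫ x in Ioi t, f x :=
  setIntegral_nonneg measurableSet_Ioi (fun x _ => hnn x)

lemma Fcdf_le_one {f : ℝ → ℝ} (hnn : ∀ x, 0 ≤ f x) (hint : IntegrableOn f (Ioi 0))
    (hone : ∫ γ in Set.Ioi (0:ℝ), f γ = 1) {t : ℝ} (ht : 0 ≤ t) :
    Fcdf f t ≤ 1 := by
  have h1 := Fcdf_add_tail hint ht
  have h2 := Fcdf_tail_nonneg hnn t
  rw [hone] at h1; linarith

lemma Fcdf_mono {f : ℝ → ℝ} (hnn : ∀ x, 0 ≤ f x) (hint : IntegrableOn f (Ioi 0))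
    {a b : ℝ} (ha : 0 ≤ a) (hab : a ≤ b) : Fcdf f a ≤ Fcdf f b := by
  rw [Fcdf_eq_setIntegral f ha, Fcdf_eq_setIntegral f (ha.trans hab)]
  exact setIntegral_mono_set (hint.mono_set Ioc_subset_Ioi_self)
    (Eventually.of_forall hnn) (HasSubset.Subset.eventuallyLE (Ioc_subset_Ioc_right hab))

lemma Fcdf_tendsto {f : ℝ → ℝ} (hint : IntegrableOn f (Ioi 0))
    (hone : ∫ γ in Set.Ioi (0:ℝ), f γ = 1) :
    Tendsto (Fcdf f) atTop (𝓝 1) := by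
  have := intervalIntegral_tendsto_integral_Ioi 0 hint tendsto_id
  rw [hone] at this
  exact this

lemma Fcdf_tail_pos {f : ℝ → ℝ} (hint : IntegrableOn f (Ioi 0))
    (hone : ∫ γ in Set.Ioi (0:ℝ), f γ = 1) {t : ℝ} (ht : 0 < t)
    (hsupp : Fcdf f t < 1) : 0 < ∫ x in Ioi t, f x := by
  have h1 := Fcdf_add_tail hint ht.le
  rw [hone] at h1; linarith

/-- Asymptotic equivalence (E317): along any sequence of multiplier vectors all of
whose coordinates tend to `∞`, the sum-rate-optimal rate `R*_k` of (E303) is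
asymptotically equal to the single-user water-filling rate. -/
theorem mac_rate_integral_asymptotic (K : ℕ) (hK : 1 ≤ K) (k : Fin K)
    (f : Fin K → ℝ → ℝ)
    (hmeas : ∀ i, Measurable (f i))
    (hnn : ∀ i x, 0 ≤ f i x)
    (hzero : ∀ i, ∀ x ≤ (0:ℝ), f i x = 0)
    (hint : ∀ i, IntegrableOn (f i) (Set.Ioi (0:ℝ)))
    (hone : ∀ i, ∫ γ in Set.Ioi (0:ℝ), f i γ = 1)
    (hsupp : ∀ i, ∀ t > (0:ℝ), Fcdf (f i) t < 1)
    (hlog : IntegrableOn (fun γ => Real.log γ * f k γ) (Set.Ioi (1:ℝ)))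
    (lam : ℕ → Fin K → ℝ) (hlam : ∀ n i, 0 < lam n i)
    (htend : ∀ i, Tendsto (fun n => lam n i) atTop atTop) :
    Tendsto
      (fun n =>
        (∫ h in Set.Ioi (lam n k),
            Real.log (h / lam n k) *
              (∏ i ∈ Finset.univ.erase k, Fcdf (f i) (lam n i / lam n k * h)) *
                f k h) /
          ∫ h in Set.Ioi (lam n k), Real.log (h / lam n k) * f k h)
      atTop (nhds 1) := by
  -- continuity / measurability of the CDFs
  have hFcont : ∀ i, Continuous (Fcdf (f i)) := by
    intro i
    have hfi : Integrable (f i) := by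
      have h1 : Integrable ((Set.Ioi (0:ℝ)).indicator (f i)) :=
        (hint i).integrable_indicator measurableSet_Ioi
      refine h1.congr (Eventually.of_forall fun x => ?_)
      by_cases hx : x ∈ Set.Ioi (0:ℝ)
      · simp [Set.indicator_of_mem hx]
      · simp [Set.indicator_of_notMem hx, hzero i x (le_of_not_gt hx)]
    exact intervalIntegral.continuous_primitive (fun a b => hfi.intervalIntegrable) 0
  set c : ℕ → ℝ := fun n => ∏ i ∈ Finset.univ.erase k, Fcdf (f i) (lam n i) with hc_def
  have hc : Tendsto c atTop (𝓝 1) := by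
    have h1 : Tendsto (fun n => ∏ i ∈ Finset.univ.erase k, Fcdf (f i) (lam n i)) atTop
        (𝓝 (∏ _i ∈ Finset.univ.erase k, (1:ℝ))) :=
      tendsto_finset_prod _ (fun i _ => (Fcdf_tendsto (hint i) (hone i)).comp (htend i))
    simpa using h1
  have hev : ∀ᶠ n in atTop, 1 ≤ lam n k := (htend k).eventually_ge_atTop 1
  have main : ∀ n, 1 ≤ lam n k →
      c n ≤ (∫ h in Set.Ioi (lam n k),
            Real.log (h / lam n k) *
              (∏ i ∈ Finset.univ.erase k, Fcdf (f i) (lam n i / lam n k * h)) *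
                f k h) /
          (∫ h in Set.Ioi (lam n k), Real.log (h / lam n k) * f k h) ∧
      (∫ h in Set.Ioi (lam n k),
            Real.log (h / lam n k) *
              (∏ i ∈ Finset.univ.erase k, Fcdf (f i) (lam n i / lam n k * h)) *
                f k h) /
          (∫ h in Set.Ioi (lam n k), Real.log (h / lam n k) * f k h) ≤ 1 := by
    intro n hL1
    set L := lam n k with hLdef
    have hL0 : 0 < L := hlam n k
    -- the product is in [0,1] for h > L
    have hP01 : ∀ h, L < h →
        0 ≤ (∏ i ∈ Finset.univ.erase k, Fcdf (f i) (lam n i / L * h)) ∧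
        (∏ i ∈ Finset.univ.erase k, Fcdf (f i) (lam n i / L * h)) ≤ 1 := by
      intro h hh
      have hh0 : 0 < h := lt_trans hL0 hh
      have harg : ∀ i : Fin K, 0 ≤ lam n i / L * h :=
        fun i => mul_nonneg (div_nonneg (hlam n i).le hL0.le) hh0.le
      constructor
      · exact Finset.prod_nonneg fun i _ => Fcdf_nonneg (hnn i) (harg i)
      · exact Finset.prod_le_one
          (fun i _ => Fcdf_nonneg (hnn i) (harg i))
          (fun i _ => Fcdf_le_one (hnn i) (hint i) (hone i) (harg i))
    -- properties of log on Ioi L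
    have hlognn : ∀ h, L < h → 0 ≤ Real.log (h / L) := by
      intro h hh
      exact Real.log_nonneg (by rw [le_div_iff₀ hL0]; linarith)
    have hlogle : ∀ h, L < h → Real.log (h / L) ≤ Real.log h := by
      intro h hh
      rw [Real.log_div (by linarith) (by linarith)]
      have := Real.log_nonneg hL1
      linarith
    -- integrability of the denominator integrand
    have hbase : IntegrableOn (fun h => Real.log h * f k h) (Set.Ioi L) :=
      hlog.mono_set (Ioi_subset_Ioi hL1)
    have hDmeas : AEStronglyMeasurable (fun h => Real.log (h / L) * f k h)
        (volume.restrict (Set.Ioi L)) :=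
      ((Real.measurable_log.comp (measurable_id.div_const L)).mul (hmeas k)).aestronglyMeasurable
    have hDint : IntegrableOn (fun h => Real.log (h / L) * f k h) (Set.Ioi L) := by
      refine Integrable.mono hbase hDmeas ?_
      filter_upwards [ae_restrict_mem measurableSet_Ioi] with h hh
      have hh' : L < h := hh
      rw [Real.norm_eq_abs, Real.norm_eq_abs,
        abs_of_nonneg (mul_nonneg (hlognn h hh') (hnn k h))]
      calc Real.log (h / L) * f k h ≤ Real.log h * f k h :=
            mul_le_mul_of_nonneg_right (hlogle h hh') (hnn k h)
        _ ≤ |Real.log h * f k h| := le_abs_self _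
    -- integrability of the numerator integrand
    have hNmeas : AEStronglyMeasurable
        (fun h => Real.log (h / L) *
          (∏ i ∈ Finset.univ.erase k, Fcdf (f i) (lam n i / L * h)) * f k h)
        (volume.restrict (Set.Ioi L)) := by
      refine (((Real.measurable_log.comp (measurable_id.div_const L)).mul ?_).mul
        (hmeas k)).aestronglyMeasurable
      exact Finset.measurable_prod _ fun i _ =>
        ((hFcont i).measurable.comp (measurable_id.const_mul _))
    have hNint : IntegrableOn
        (fun h => Real.log (h / L) *
          (∏ i ∈ Finset.univ.erase k, Fcdf (f i) (lam n i / L * h)) * f k h)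
        (Set.Ioi L) := by
      refine Integrable.mono hDint hNmeas ?_
      filter_upwards [ae_restrict_mem measurableSet_Ioi] with h hh
      have hh' : L < h := hh
      obtain ⟨hp0, hp1⟩ := hP01 h hh'
      rw [Real.norm_eq_abs, Real.norm_eq_abs,
        abs_of_nonneg (mul_nonneg (mul_nonneg (hlognn h hh') hp0) (hnn k h))]
      calc Real.log (h / L) * (∏ i ∈ Finset.univ.erase k, Fcdf (f i) (lam n i / L * h)) * f k h
          ≤ Real.log (h / L) * 1 * f k h := by
            refine mul_le_mul_of_nonneg_right ?_ (hnn k h)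
            exact mul_le_mul_of_nonneg_left hp1 (hlognn h hh')
        _ = Real.log (h / L) * f k h := by ring
        _ ≤ |Real.log (h / L) * f k h| := le_abs_self _
    -- N ≤ D
    have hND : (∫ h in Set.Ioi L,
          Real.log (h / L) *
            (∏ i ∈ Finset.univ.erase k, Fcdf (f i) (lam n i / L * h)) * f k h) ≤
        ∫ h in Set.Ioi L, Real.log (h / L) * f k h := by
      refine setIntegral_mono_on hNint hDint measurableSet_Ioi ?_
      intro h hh
      have hh' : L < h := hh
      obtain ⟨hp0, hp1⟩ := hP01 h hh'
      calc Real.log (h / L) * (∏ i ∈ Finset.univ.erase k, Fcdf (f i) (lam n i / L * h)) * f k h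
          ≤ Real.log (h / L) * 1 * f k h := by
            refine mul_le_mul_of_nonneg_right ?_ (hnn k h)
            exact mul_le_mul_of_nonneg_left hp1 (hlognn h hh')
        _ = Real.log (h / L) * f k h := by ring
    -- c n * D ≤ N
    have hcD : c n * (∫ h in Set.Ioi L, Real.log (h / L) * f k h) ≤
        ∫ h in Set.Ioi L,
          Real.log (h / L) *
            (∏ i ∈ Finset.univ.erase k, Fcdf (f i) (lam n i / L * h)) * f k h := by
      rw [← integral_const_mul]
      refine setIntegral_mono_on (hDint.const_mul _) hNint measurableSet_Ioi ?_
      intro h hh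
      have hh' : L < h := hh
      have hprod : c n ≤ ∏ i ∈ Finset.univ.erase k, Fcdf (f i) (lam n i / L * h) := by
        refine Finset.prod_le_prod (fun i _ => Fcdf_nonneg (hnn i) (hlam n i).le) ?_
        intro i _
        refine Fcdf_mono (hnn i) (hint i) (hlam n i).le ?_
        calc lam n i = lam n i / L * L := (div_mul_cancel₀ _ hL0.ne').symm
          _ ≤ lam n i / L * h :=
            mul_le_mul_of_nonneg_left hh'.le (div_nonneg (hlam n i).le hL0.le)
      calc c n * (Real.log (h / L) * f k h)
          ≤ (∏ i ∈ Finset.univ.erase k, Fcdf (f i) (lam n i / L * h)) *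
              (Real.log (h / L) * f k h) :=
            mul_le_mul_of_nonneg_right hprod (mul_nonneg (hlognn h hh') (hnn k h))
        _ = Real.log (h / L) *
              (∏ i ∈ Finset.univ.erase k, Fcdf (f i) (lam n i / L * h)) * f k h := by ring
    -- D > 0
    have hDpos : 0 < ∫ h in Set.Ioi L, Real.log (h / L) * f k h := by
      have htail : 0 < ∫ x in Set.Ioi (2 * L), f k x :=
        Fcdf_tail_pos (hint k) (hone k) (by linarith) (hsupp k _ (by linarith))
      have step1 : Real.log 2 * ∫ x in Set.Ioi (2 * L), f k x ≤
          ∫ h in Set.Ioi (2 * L), Real.log (h / L) * f k h := by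
        rw [← integral_const_mul]
        refine setIntegral_mono_on (((hint k).mono_set (Ioi_subset_Ioi (by linarith : (0:ℝ) ≤ 2 * L))).const_mul _)
          (hDint.mono_set (Ioi_subset_Ioi (by linarith))) measurableSet_Ioi ?_
        intro h hh
        have hh' : 2 * L < h := hh
        refine mul_le_mul_of_nonneg_right ?_ (hnn k h)
        have h2 : (2:ℝ) ≤ h / L := by rw [le_div_iff₀ hL0]; linarith
        exact Real.log_le_log two_pos h2
      have step2 : (∫ h in Set.Ioi (2 * L), Real.log (h / L) * f k h) ≤
          ∫ h in Set.Ioi L, Real.log (h / L) * f k h := by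
        refine setIntegral_mono_set hDint ?_
          (HasSubset.Subset.eventuallyLE (Ioi_subset_Ioi (by linarith)))
        filter_upwards [ae_restrict_mem measurableSet_Ioi] with h hh
        exact mul_nonneg (hlognn h hh) (hnn k h)
      have hlog2 : 0 < Real.log 2 := Real.log_pos one_lt_two
      nlinarith
    exact ⟨(le_div_iff₀ hDpos).mpr hcD, (div_le_one hDpos).mpr hND⟩
  refine tendsto_of_tendsto_of_tendsto_of_le_of_le' hc tendsto_const_nhds ?_ ?_
  · filter_upwards [hev] with n hn using (main n hn).1
  · filter_upwards [hev] with n hn using (main n hn).2
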